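/- Define h : ℝ → ℝ by h(x) = 2(1 + 2cosh x)·sinh x / (2cosh x + cosh 2x). Then h(0) = 0, h is strictly increasing on [0, ∞), h(x) < 2 for all x ≥ 0, and h(x) → 2 as x → ∞. Consequently, for every integer k ≥ 2 there is no x > 0 with h(x) = k, and there is exactly one x > 0 with h(x) = 1. -/

import Mathlib

open Real

/-- The function `h(x) = 2(1 + 2cosh x)·sinh x / (2cosh x + cosh 2x)` from the
Bach-flatness condition on Hirzebruch surfaces. -/
noncomputable def hPage (x : ℝ) : ℝ :=
  2 * (1 + 2 * Real.cosh x) * Real.sinh x / (2 * Real.cosh x + Real.cosh (2*x))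

lemma hPage_denom_pos (x : ℝ) : 0 < 2 * Real.cosh x + Real.cosh (2*x) := by
  have h1 := Real.cosh_pos x
  have h2 := Real.cosh_pos (2*x)
  linarith

lemma hPage_hasDerivAt (x : ℝ) :
    HasDerivAt hPage
      ((8 + 8 * Real.cosh x + 2 * Real.cosh x * Real.cosh (2*x)) /
        (2 * Real.cosh x + Real.cosh (2*x)) ^ 2) x := by
  have hN : HasDerivAt (fun x => 2 * (1 + 2 * Real.cosh x) * Real.sinh x)
      ((2 * (2 * Real.sinh x)) * Real.sinh x
        + 2 * (1 + 2 * Real.cosh x) * Real.cosh x) x := by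
    have h1 : HasDerivAt (fun x => 2 * (1 + 2 * Real.cosh x)) (2 * (2 * Real.sinh x)) x := by
      have := ((Real.hasDerivAt_cosh x).const_mul 2).const_add 1
      exact this.const_mul 2
    exact h1.mul (Real.hasDerivAt_sinh x)
  have hD : HasDerivAt (fun x => 2 * Real.cosh x + Real.cosh (2*x))
      (2 * Real.sinh x + 2 * Real.sinh (2*x)) x := by
    have h2 : HasDerivAt (fun x => Real.cosh (2*x)) (2 * Real.sinh (2*x)) x := by
      have hid : HasDerivAt (fun x : ℝ => 2 * x) 2 x := by
        simpa using (hasDerivAt_id x).const_mul 2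
      have := (Real.hasDerivAt_cosh (2*x)).comp x hid
      simpa [Function.comp_def, mul_comm] using this
    exact ((Real.hasDerivAt_cosh x).const_mul 2).add h2
  have := hN.div hD (hPage_denom_pos x).ne'
  convert this using 2
  · rfl
  · rfl
  · rfl
  have hc2 := Real.cosh_two_mul x
  have hs2 := Real.sinh_two_mul x
  have hpy := Real.cosh_sq_sub_sinh_sq x
  rw [hc2, hs2]
  linear_combination (-(4 * Real.cosh x ^ 2 - 4 * Real.sinh x ^ 2 + 8 + 8 * Real.cosh x)) * hpy

lemma hPage_strictMono : StrictMono hPage := by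
  have hdiff : Differentiable ℝ hPage := fun x => (hPage_hasDerivAt x).differentiableAt
  apply strictMono_of_deriv_pos
  intro x
  rw [(hPage_hasDerivAt x).deriv]
  have h1 := Real.one_le_cosh x
  have h2 := Real.one_le_cosh (2*x)
  have hd := hPage_denom_pos x
  have : (0:ℝ) < 8 + 8 * Real.cosh x + 2 * Real.cosh x * Real.cosh (2*x) := by nlinarith
  positivity

lemma hPage_lt_two (x : ℝ) : hPage x < 2 := by
  rw [hPage, div_lt_iff₀ (hPage_denom_pos x)]
  have hsc : Real.sinh x < Real.cosh x := by
    have := Real.cosh_sub_sinh x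
    have := Real.exp_pos (-x)
    linarith
  have h1 := Real.one_le_cosh x
  have hc2 := Real.cosh_two_mul x
  have hpy := Real.cosh_sq_sub_sinh_sq x
  nlinarith [Real.cosh_pos x]

lemma hPage_eq (x : ℝ) :
    hPage x = (Real.exp (-x) + 1 + Real.exp (-x) ^ 2) * (1 - Real.exp (-x) ^ 2) /
      (Real.exp (-x) + Real.exp (-x) ^ 3 + 1/2 + Real.exp (-x) ^ 4 / 2) := by
  have ha : Real.exp x ≠ 0 := (Real.exp_pos x).ne'
  have h2x : Real.exp (2*x) = Real.exp x ^ 2 := by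
    rw [two_mul, Real.exp_add, sq]
  have hdpos := hPage_denom_pos x
  rw [hPage, Real.sinh_eq, Real.cosh_eq, Real.cosh_eq, h2x, Real.exp_neg, Real.exp_neg, h2x]
  rw [Real.cosh_eq, Real.cosh_eq, h2x, Real.exp_neg, Real.exp_neg, h2x] at hdpos
  field_simp
  ring

lemma hPage_tendsto : Filter.Tendsto hPage Filter.atTop (nhds 2) := by
  have hcont : ContinuousAt
      (fun v : ℝ => (v + 1 + v ^ 2) * (1 - v ^ 2) / (v + v ^ 3 + 1/2 + v ^ 4 / 2)) 0 := by
    apply ContinuousAt.div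
    · fun_prop
    · fun_prop
    · norm_num
  have h0 : Filter.Tendsto (fun x : ℝ => Real.exp (-x)) Filter.atTop (nhds 0) :=
    Real.tendsto_exp_neg_atTop_nhds_zero
  have := (hcont.tendsto.comp h0)
  simp only [Function.comp_def] at this
  have heval : ((0:ℝ) + 1 + 0 ^ 2) * (1 - 0 ^ 2) / (0 + 0 ^ 3 + 1/2 + 0 ^ 4 / 2) = 2 := by
    norm_num
  rw [heval] at this
  exact this.congr fun x => (hPage_eq x).symm

/-- `h(0) = 0`, `h` is strictly increasing on `[0, ∞)`, `h < 2` there,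
`h → 2` at `∞`; hence no `x > 0` has `h(x) = k` for an integer `k ≥ 2`, and there is
exactly one `x > 0` with `h(x) = 1`. -/
theorem hPage_properties :
    hPage 0 = 0 ∧
    StrictMonoOn hPage (Set.Ici (0 : ℝ)) ∧
    (∀ x : ℝ, 0 ≤ x → hPage x < 2) ∧
    Filter.Tendsto hPage Filter.atTop (nhds 2) ∧
    (∀ k : ℤ, 2 ≤ k → ¬∃ x : ℝ, 0 < x ∧ hPage x = (k : ℝ)) ∧
    (∃! x : ℝ, 0 < x ∧ hPage x = 1) := by
  have h0 : hPage 0 = 0 := by simp [hPage]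
  refine ⟨h0, hPage_strictMono.strictMonoOn _, fun x _ => hPage_lt_two x, hPage_tendsto,
    ?_, ?_⟩
  · rintro k hk ⟨x, hx, hxk⟩
    have := hPage_lt_two x
    rw [hxk] at this
    have : (k : ℝ) < 2 := this
    exact absurd (by exact_mod_cast this) (not_lt.mpr hk)
  · have hcont : Continuous hPage := by
      apply Continuous.div
      · fun_prop
      · fun_prop
      · exact fun x => (hPage_denom_pos x).ne'
    -- find b with hPage b > 1
    have hev : ∀ᶠ x in Filter.atTop, 1 < hPage x :=
      hPage_tendsto.eventually (eventually_gt_nhds (by norm_num))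
    obtain ⟨b, hb⟩ := hev.exists
    have hb0 : 0 < b := by
      by_contra h
      push_neg at h
      have : hPage b ≤ hPage 0 := hPage_strictMono.le_iff_le.mpr h
      rw [h0] at this
      linarith
    have hIVT : (1:ℝ) ∈ Set.Ioo (hPage 0) (hPage b) := by
      rw [h0]; exact ⟨one_pos, hb⟩
    obtain ⟨x, hx, hx1⟩ := intermediate_value_Ioo hb0.le hcont.continuousOn hIVT
    refine ⟨x, ⟨hx.1, hx1⟩, ?_⟩
    rintro y ⟨hy, hy1⟩
    exact hPage_strictMono.injective (by rw [hy1, hx1])
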